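/- Let K = {x ∈ ℝ^n : Ax ≥ b} be a bounded polytope with nonempty interior, where A ∈ ℝ^{m×n} has rows a_1ᵀ,…,a_mᵀ and b ∈ ℝ^m, and let x* be the analytic center of K, i.e., the minimizer of the log-barrier φ(x) = Σ_{i=1}^m −ln(a_iᵀx − b_i) over the interior of K. Then K ⊆ {x ∈ ℝ^n : (x − x*)ᵀ H(x*) (x − x*) ≤ m²}; that is, every y ∈ K satisfies (y − x*)ᵀ H(x*) (y − x*) ≤ m². -/

import Mathlib

open Matrix

/-- The Hessian of the log-barrier of the polytope `{x | A x ≥ b}` at the point `x`: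
`H(x) = ∑ i, aᵢ aᵢᵀ / (aᵢᵀ x - bᵢ)²`. -/
noncomputable def Hmat {m n : ℕ} (A : Matrix (Fin m) (Fin n) ℝ) (b : Fin m → ℝ)
    (x : Fin n → ℝ) : Matrix (Fin n) (Fin n) ℝ :=
  ∑ i, ((A i ⬝ᵥ x - b i) ^ 2)⁻¹ • Matrix.vecMulVec (A i) (A i)

/-- The log-barrier `φ(x) = ∑ i, -ln(aᵢᵀx - bᵢ)`. -/
noncomputable def logBarrier {m n : ℕ} (A : Matrix (Fin m) (Fin n) ℝ) (b : Fin m → ℝ)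
    (x : Fin n → ℝ) : ℝ :=
  ∑ i, -Real.log (A i ⬝ᵥ x - b i)

private lemma vecMulVec_mulVec' {n : ℕ} (w v x : Fin n → ℝ) :
    vecMulVec w v *ᵥ x = (v ⬝ᵥ x) • w := by
  ext i
  simp only [vecMulVec_apply, mulVec, dotProduct, Pi.smul_apply, smul_eq_mul, Finset.sum_mul]
  exact Finset.sum_congr rfl fun j _ => by ring

private lemma sum_mulVec' {m n : ℕ} (M : Fin m → Matrix (Fin n) (Fin n) ℝ) (v : Fin n → ℝ) :
    (∑ i, M i) *ᵥ v = ∑ i, M i *ᵥ v := by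
  ext j
  simp only [mulVec, dotProduct, Finset.sum_apply, Matrix.sum_apply, Finset.sum_mul]
  rw [Finset.sum_comm]

private lemma dotProduct_sum' {m n : ℕ} (d : Fin n → ℝ) (f : Fin m → Fin n → ℝ) :
    d ⬝ᵥ (∑ i, f i) = ∑ i, d ⬝ᵥ f i := by
  simp only [dotProduct, Finset.sum_apply, Finset.mul_sum]
  rw [Finset.sum_comm]

/-- A bounded polytope `K = {x | Ax ≥ b}` with nonempty interior and analytic center `x*`
(the minimizer of the log-barrier over the interior) satisfies
`K ⊆ {x : (x - x*)ᵀ H(x*) (x - x*) ≤ m²}`. -/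
theorem polytope_subset_dikin_of_analytic_center {m n : ℕ}
    (A : Matrix (Fin m) (Fin n) ℝ) (b : Fin m → ℝ)
    (hbd : Bornology.IsBounded {x : Fin n → ℝ | ∀ i, A i ⬝ᵥ x ≥ b i})
    (xs : Fin n → ℝ) (hxs : ∀ i, A i ⬝ᵥ xs > b i)
    (hmin : ∀ x : Fin n → ℝ, (∀ i, A i ⬝ᵥ x > b i) →
      logBarrier A b xs ≤ logBarrier A b x)
    (y : Fin n → ℝ) (hy : ∀ i, A i ⬝ᵥ y ≥ b i) :
    (y - xs) ⬝ᵥ (Hmat A b xs) *ᵥ (y - xs) ≤ (m : ℝ) ^ 2 := by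
  set d : Fin n → ℝ := y - xs with hd
  set s : Fin m → ℝ := fun i => A i ⬝ᵥ xs - b i with hsdef
  have hs : ∀ i, 0 < s i := fun i => sub_pos.mpr (hxs i)
  set t : Fin m → ℝ := fun i => A i ⬝ᵥ d with htdef
  have hts : ∀ i, -(s i) ≤ t i := by
    intro i
    have h1 : A i ⬝ᵥ d = A i ⬝ᵥ y - A i ⬝ᵥ xs := by rw [hd, dotProduct_sub]
    have hyi := hy i
    simp only [htdef, h1, hsdef]
    linarith
  -- the quadratic form equals ∑ (t i / s i)^2
  have hquad : d ⬝ᵥ (Hmat A b xs) *ᵥ d = ∑ i, (t i / s i) ^ 2 := by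
    rw [Hmat, sum_mulVec', dotProduct_sum']
    refine Finset.sum_congr rfl fun i _ => ?_
    rw [smul_mulVec, vecMulVec_mulVec']
    have h1 : d ⬝ᵥ (((A i ⬝ᵥ xs - b i) ^ 2)⁻¹ • (A i ⬝ᵥ d) • A i)
        = ((A i ⬝ᵥ xs - b i) ^ 2)⁻¹ * ((A i ⬝ᵥ d) * (d ⬝ᵥ A i)) := by
      rw [dotProduct_smul, dotProduct_smul]; rfl
    have hsi : s i ≠ 0 := (hs i).ne'
    have h2 : A i ⬝ᵥ xs - b i = s i := by rw [hsdef]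
    have h3 : A i ⬝ᵥ d = t i := by rw [htdef]
    rw [h1, h2, dotProduct_comm d (A i), h3]
    field_simp
  rw [hquad]
  -- interior points along the segment
  have hinterior : ∀ ε : ℝ, 0 ≤ ε → ε < 1 → ∀ i, A i ⬝ᵥ (xs + ε • d) > b i := by
    intro ε hε hε1 i
    have h1 : A i ⬝ᵥ (xs + ε • d) = (A i ⬝ᵥ xs) + ε * (A i ⬝ᵥ d) := by
      rw [dotProduct_add, dotProduct_smul]; rfl
    rw [h1]
    have h4 : ε * (A i ⬝ᵥ d) = ε * t i := by rw [htdef]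
    rw [h4]
    have h2 : ε * (-(s i)) ≤ ε * t i := mul_le_mul_of_nonneg_left (hts i) hε
    have h3 : 0 < s i - ε * s i := by nlinarith [hs i]
    have h5 : 0 < s i + ε * t i := by nlinarith
    have h6 : s i = A i ⬝ᵥ xs - b i := by rw [hsdef]
    rw [h6] at h5; linarith
  -- the barrier along the segment
  have hbar : ∀ ε : ℝ, logBarrier A b (xs + ε • d) = ∑ i, -Real.log (s i + ε * t i) := by
    intro ε
    rw [logBarrier]
    refine Finset.sum_congr rfl fun i _ => ?_
    have h1 : A i ⬝ᵥ (xs + ε • d) = (A i ⬝ᵥ xs) + ε * (A i ⬝ᵥ d) := by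
      rw [dotProduct_add, dotProduct_smul]; rfl
    rw [h1, hsdef, htdef]
    ring_nf
  -- derivative of the barrier along the segment at 0
  have hderiv : HasDerivAt (fun ε : ℝ => logBarrier A b (xs + ε • d))
      (∑ i, -(t i / s i)) 0 := by
    have hkey : HasDerivAt (fun ε : ℝ => ∑ i, -Real.log (s i + ε * t i))
        (∑ i, -(t i / s i)) 0 := by
      apply HasDerivAt.fun_sum
      intro i _
      have h1 : HasDerivAt (fun ε : ℝ => s i + ε * t i) (t i) 0 :=
        (hasDerivAt_mul_const (t i)).const_add (s i)
      have h2 : s i + 0 * t i ≠ 0 := by simpa using (hs i).ne'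
      have h3 := (h1.log h2).neg
      have h4 : t i / (s i + 0 * t i) = t i / s i := by norm_num
      rw [h4] at h3
      exact h3
    have hfun : (fun ε : ℝ => logBarrier A b (xs + ε • d))
        = fun ε : ℝ => ∑ i, -Real.log (s i + ε * t i) := funext hbar
    rw [hfun]
    exact hkey
  -- the directional derivative is nonnegative since 0 is a minimum on [0,1)
  have hS : ∑ i, t i / s i ≤ 0 := by
    have htend := hasDerivAt_iff_tendsto_slope.mp hderiv
    have hsub : Set.Ioi (0:ℝ) ⊆ {(0:ℝ)}ᶜ := by
      intro x hx
      simp only [Set.mem_Ioi] at hx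
      simp [hx.ne']
    have htend' := htend.mono_left (nhdsWithin_mono 0 hsub)
    have hnonneg : ∀ᶠ ε in nhdsWithin (0:ℝ) (Set.Ioi 0),
        0 ≤ slope (fun ε : ℝ => logBarrier A b (xs + ε • d)) 0 ε := by
      filter_upwards [Ioo_mem_nhdsGT_of_mem (Set.left_mem_Ico.mpr one_pos)] with ε hε
      have h0 : logBarrier A b (xs + (0:ℝ) • d) = logBarrier A b xs := by simp
      have hle : logBarrier A b xs ≤ logBarrier A b (xs + ε • d) :=
        hmin _ (hinterior ε hε.1.le hε.2)
      rw [slope_def_field]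
      apply div_nonneg _ (by linarith [hε.1] : (0:ℝ) ≤ ε - 0)
      linarith
    have hge := ge_of_tendsto htend' hnonneg
    have heq : ∑ i, -(t i / s i) = -(∑ i, t i / s i) := by
      rw [← Finset.sum_neg_distrib]
    rw [heq] at hge
    linarith
  -- final algebraic step
  have hu1 : ∀ i, -1 ≤ t i / s i := by
    intro i
    rw [le_div_iff₀ (hs i)]
    linarith [hts i]
  set u : Fin m → ℝ := fun i => t i / s i with hudef
  set S : ℝ := ∑ i, u i with hSdef
  have hSm : -(m:ℝ) ≤ S := by
    rw [hSdef]
    calc -(m:ℝ) = ∑ _i : Fin m, (-1:ℝ) := by simp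
    _ ≤ ∑ i, u i := Finset.sum_le_sum fun i _ => hu1 i
  have hv : ∀ i, (0:ℝ) ≤ 1 + u i := fun i => by linarith [hu1 i]
  have hv2 : ∑ i, (1 + u i) ^ 2 ≤ (∑ i, (1 + u i)) ^ 2 :=
    Finset.sum_sq_le_sq_sum_of_nonneg fun i _ => hv i
  have hvsum : ∑ i, (1 + u i) = (m:ℝ) + S := by
    rw [Finset.sum_add_distrib]; simp [hSdef]
  have hvsq : ∑ i, (1 + u i) ^ 2 = (m:ℝ) + 2 * S + ∑ i, u i ^ 2 := by
    have hexp : ∀ i : Fin m, (1 + u i) ^ 2 = 1 + 2 * u i + u i ^ 2 := fun i => by ring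
    simp_rw [hexp]
    rw [Finset.sum_add_distrib, Finset.sum_add_distrib, ← Finset.mul_sum]
    simp [hSdef]
  have hkey : ∑ i, u i ^ 2 ≤ ((m:ℝ) + S) ^ 2 - (m:ℝ) - 2 * S := by
    rw [← hvsum]; linarith [hv2, hvsq]
  rcases Nat.eq_zero_or_pos m with hm | hm
  · subst hm
    simp
  · have hm1 : (1:ℝ) ≤ (m:ℝ) := by exact_mod_cast hm
    nlinarith [hkey, hS, hSm, mul_nonneg (neg_nonneg.mpr hS) (by linarith : (0:ℝ) ≤ S + m)]
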